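/- Let q be a prime power, let m ≥ n ≥ 1 and 1 ≤ k ≤ n, and let a_1, …, a_n ∈ F_{q^m} be linearly independent over F_q. Let C ⊆ (F_{q^m})^n be the F_{q^m}-linear span of the k vectors g_i = (a_1^{q^{i-1}}, …, a_n^{q^{i-1}}) for i = 1, …, k. Fix an F_q-basis of F_{q^m} and identify each c = (c_1, …, c_n) ∈ (F_{q^m})^n with the m×n matrix over F_q whose j-th column is the coordinate vector of c_j. Then the resulting set of matrices C ⊆ Mat_{m×n}(F_q) has exactly q^{km} elements, and every nonzero matrix in C has rank at least n − k + 1; that is, C is an MRD code with minimum rank distance n − k + 1. -/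

import Mathlib

open Polynomial Submodule Module Set Matrix

section GabAux

variable {K E : Type*} [Field K] [Fintype K] [Field E] [Algebra K E]

private lemma gab_add_pow (x y : E) (N : ℕ) :
    (x + y) ^ (Fintype.card K ^ N) = x ^ (Fintype.card K ^ N) + y ^ (Fintype.card K ^ N) := by
  obtain ⟨p⟩ := CharP.exists K
  haveI : CharP E p := charP_of_injective_algebraMap (algebraMap K E).injective p
  obtain ⟨t, hp, hcard⟩ := FiniteField.card K p
  haveI : Fact p.Prime := ⟨hp⟩
  rw [hcard, ← pow_mul]
  exact add_pow_char_pow x y p _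

private lemma gab_smul_pow (s : K) (x : E) (N : ℕ) :
    (s • x) ^ (Fintype.card K ^ N) = s • x ^ (Fintype.card K ^ N) := by
  rw [Algebra.smul_def, Algebra.smul_def, mul_pow, ← map_pow, FiniteField.pow_card_pow]

/-- The `q`-linearized map `x ↦ ∑ lᵢ x^{q^i}` as a `K`-linear map. -/
noncomputable def qlin (k : ℕ) (l : Fin k → E) : E →ₗ[K] E where
  toFun x := ∑ i, l i * x ^ (Fintype.card K ^ (i : ℕ))
  map_add' x y := by
    simp_rw [gab_add_pow (K := K), mul_add, Finset.sum_add_distrib]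
  map_smul' s x := by
    simp_rw [RingHom.id_apply, gab_smul_pow (K := K), Finset.smul_sum, mul_smul_comm]

lemma qlin_apply (k : ℕ) (l : Fin k → E) (x : E) :
    qlin (K := K) k l x = ∑ i, l i * x ^ (Fintype.card K ^ (i : ℕ)) := rfl

/-- Moore-matrix-type lemma: a nonzero linearized polynomial of `q`-degree `< k`
cannot vanish on `k` `K`-linearly independent elements. -/
lemma moore_vanish {k : ℕ} (l : Fin k → E) (v : Fin k → E)
    (hv : LinearIndependent K v)
    (h : ∀ j, ∑ i, l i * v j ^ (Fintype.card K ^ (i : ℕ)) = 0) : l = 0 := by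
  classical
  by_contra hl
  obtain ⟨i₀, hi₀⟩ : ∃ i, l i ≠ 0 := by
    by_contra h'
    push_neg at h'
    exact hl (funext h')
  have hk : 1 ≤ k := Nat.one_le_iff_ne_zero.mpr (by rintro rfl; exact i₀.elim0)
  set q := Fintype.card K with hq
  have hq2 : 2 ≤ q := Fintype.one_lt_card
  -- the linearized polynomial
  set P : E[X] := ∑ i : Fin k, Polynomial.C (l i) * Polynomial.X ^ (q ^ (i : ℕ)) with hP
  have hinj : Function.Injective (fun i : ℕ => q ^ i) := Nat.pow_right_injective hq2
  have hcoeff : P.coeff (q ^ (i₀ : ℕ)) = l i₀ := by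
    rw [hP, Polynomial.finset_sum_coeff]
    have key : ∀ i : Fin k, (Polynomial.C (l i) * Polynomial.X ^ (q ^ (i : ℕ))).coeff
        (q ^ (i₀ : ℕ)) = if i = i₀ then l i else 0 := by
      intro i
      rw [Polynomial.coeff_C_mul, Polynomial.coeff_X_pow]
      by_cases h : i = i₀
      · subst h; simp
      · have hne : q ^ (i : ℕ) ≠ q ^ (i₀ : ℕ) := fun he => h (Fin.ext (hinj he))
        simp [h, hne, Ne.symm hne]
    rw [Finset.sum_congr rfl (fun i _ => key i), Finset.sum_ite_eq' Finset.univ i₀ l]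
    simp
  have hP0 : P ≠ 0 := fun h0 => hi₀ (by rw [← hcoeff, h0, Polynomial.coeff_zero])
  have hdeg : P.natDegree ≤ q ^ (k - 1) := by
    refine (Polynomial.natDegree_sum_le _ _).trans ?_
    rw [Finset.fold_max_le]
    refine ⟨Nat.zero_le _, fun i _ => ?_⟩
    refine (Polynomial.natDegree_C_mul_le _ _).trans ?_
    rw [Polynomial.natDegree_X_pow]
    exact Nat.pow_le_pow_right (by omega) (by omega)
  -- every element of span of v is a root
  have hroot : ∀ x ∈ span K (Set.range v), P.IsRoot x := by
    intro x hx
    have hker : span K (Set.range v) ≤ LinearMap.ker (qlin (K := K) k l) := by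
      rw [span_le]
      rintro _ ⟨j, rfl⟩
      exact h j
    have : qlin (K := K) k l x = 0 := hker hx
    rw [qlin_apply] at this
    simpa [Polynomial.IsRoot, hP, Polynomial.eval_finset_sum]
  -- count
  haveI : Fintype (span K (Set.range v)) :=
    Module.fintypeOfFintype (Basis.span hv)
  have hcard : Fintype.card (span K (Set.range v)) = q ^ k := by
    rw [Module.card_fintype (Basis.span hv), Fintype.card_fin]
  have hle : Fintype.card (span K (Set.range v)) ≤ P.roots.toFinset.card := by
    rw [← Finset.card_univ, ← Finset.card_image_of_injective Finset.univ
      (Subtype.val_injective : Function.Injective ((↑) : span K (Set.range v) → E))]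
    refine Finset.card_le_card ?_
    intro x hx
    simp only [Finset.mem_image] at hx
    obtain ⟨w, -, rfl⟩ := hx
    rw [Multiset.mem_toFinset, Polynomial.mem_roots hP0]
    exact hroot _ w.2
  have : q ^ k ≤ q ^ (k - 1) :=
    hcard ▸ hle |>.trans ((Multiset.toFinset_card_le _).trans ((Polynomial.card_roots' P).trans hdeg))
  have : ¬ q ^ k ≤ q ^ (k - 1) := by
    apply Nat.not_le_of_lt
    exact Nat.pow_lt_pow_right (by omega) (by omega)
  omega

end GabAux


/-- **Delsarte–Gabidulin construction.** Let `K` be a finite field with `q`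
elements and `E` an extension field of `K` of degree `m ≥ n`, with a fixed
`K`-basis `b` of `E`. Given `a₁, …, aₙ ∈ E` linearly independent over `K` and
`1 ≤ k ≤ n`, let `C` be the `E`-linear span of the vectors
`gᵢ = (a₁^{q^i}, …, aₙ^{q^i})`, `0 ≤ i ≤ k-1`, and identify each `c ∈ C` with
the `m × n` matrix over `K` whose `j`-th column is the coordinate vector of
`cⱼ`.  The resulting set of matrices has exactly `q^{km}` elements and every
nonzero matrix in it has rank at least `n - k + 1`; i.e. it is an MRD code
with minimum rank distance `n - k + 1`. -/
theorem gabidulin_code_is_MRD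
    {K E : Type*} [Field K] [Fintype K] [Field E] [Algebra K E]
    {m n k : ℕ} (hnm : n ≤ m) (hn : 1 ≤ n) (hk1 : 1 ≤ k) (hkn : k ≤ n)
    (b : Basis (Fin m) K E) (a : Fin n → E) (ha : LinearIndependent K a) :
    letI q := Fintype.card K
    letI g : Fin k → (Fin n → E) := fun i j => (a j) ^ (q ^ (i : ℕ))
    letI C : Submodule E (Fin n → E) := Submodule.span E (Set.range g)
    letI toMat : (Fin n → E) → Matrix (Fin m) (Fin n) K :=
      fun c => Matrix.of fun i j => b.repr (c j) i
    (toMat '' (C : Set (Fin n → E))).ncard = q ^ (k * m) ∧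
      ∀ A ∈ toMat '' (C : Set (Fin n → E)), A ≠ 0 → (n - k + 1 : ℕ) ≤ A.rank := by
  classical
  set q := Fintype.card K with hq
  set g : Fin k → (Fin n → E) := fun i j => (a j) ^ (q ^ (i : ℕ)) with hgdef
  set C : Submodule E (Fin n → E) := Submodule.span E (Set.range g) with hCdef
  set toMat : (Fin n → E) → Matrix (Fin m) (Fin n) K :=
    fun c => Matrix.of fun i j => b.repr (c j) i with htmdef
  haveI : FiniteDimensional K E := Module.Finite.of_basis b
  letI : Fintype E := Module.fintypeOfFintype b
  -- `g` is `E`-linearly independent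
  have hg : LinearIndependent E g := by
    rw [Fintype.linearIndependent_iff]
    intro μ hμ
    have h0 : ∀ j : Fin k, ∑ i, μ i * (a (Fin.castLE hkn j)) ^ (q ^ (i : ℕ)) = 0 := by
      intro j
      have := congrFun hμ (Fin.castLE hkn j)
      simpa [g, Finset.sum_apply] using this
    have := moore_vanish (K := K) μ (fun j => a (Fin.castLE hkn j))
      (ha.comp _ (Fin.castLE_injective hkn)) h0
    intro i; exact congrFun this i
  -- toMat is injective
  have htoMat_inj : Function.Injective toMat := by
    intro c c' hcc
    funext j
    apply b.repr.injective
    ext i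
    exact congrFun (congrFun hcc i) j
  constructor
  · -- cardinality
    rw [Set.ncard_image_of_injective _ htoMat_inj]
    have h1 : (C : Set (Fin n → E)).ncard = Fintype.card C := by
      rw [← Nat.card_coe_set_eq, Nat.card_eq_fintype_card]
      rfl
    rw [h1, Module.card_fintype (Basis.span hg), Module.card_fintype b,
      Fintype.card_fin, Fintype.card_fin, ← pow_mul, mul_comm]
  · -- rank bound
    rintro A ⟨c, hc, rfl⟩ hA
    obtain ⟨l, hl⟩ : ∃ l : Fin k → E, ∑ i, l i • g i = c :=
      (mem_span_range_iff_exists_fun E).mp hc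
    have hc0 : c ≠ 0 := by
      rintro rfl
      apply hA
      ext i j
      simp [toMat]
    -- c j = f (a j) where f = qlin l
    set f : E →ₗ[K] E := qlin (K := K) k l with hf
    have hcj : ∀ j, c j = f (a j) := by
      intro j
      rw [← hl, qlin_apply]
      simp [g, Finset.sum_apply, smul_eq_mul, hq]
    -- rank as finrank of column span
    have hrank : (toMat c).rank = finrank K (span K (Set.range (toMat c)ᵀ)) :=
      Matrix.rank_eq_finrank_span_cols _
    have hcol : (toMat c)ᵀ = fun j => b.equivFun (c j) := by
      funext j i
      simp [toMat, Matrix.transpose, Basis.equivFun_apply]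
    have hspan : span K (Set.range (toMat c)ᵀ) =
        (span K (Set.range c)).map (b.equivFun : E →ₗ[K] (Fin m → K)) := by
      rw [hcol, ← Submodule.span_image]
      congr 1
      rw [← Set.range_comp]
      rfl
    have hrk2 : (toMat c).rank = finrank K (span K (Set.range c)) := by
      rw [hrank, hspan, LinearEquiv.finrank_map_eq]
    have hrangec : span K (Set.range c) = (span K (Set.range a)).map f := by
      rw [← Submodule.span_image, ← Set.range_comp,
        show c = ⇑f ∘ a from funext hcj]
    -- rank nullity on W := span a
    set W := span K (Set.range a) with hW
    set f' : W →ₗ[K] E := f ∘ₗ W.subtype with hf'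
    have hrange : LinearMap.range f' = W.map f := by
      rw [hf', LinearMap.range_comp, Submodule.range_subtype]
    have hrn : finrank K (LinearMap.range f') + finrank K (LinearMap.ker f') = finrank K W :=
      LinearMap.finrank_range_add_finrank_ker f'
    have hWn : finrank K W = n := by
      rw [hW, finrank_span_eq_card ha, Fintype.card_fin]
    -- kernel bound
    have hker : finrank K (LinearMap.ker f') ≤ k - 1 := by
      by_contra hcon
      push_neg at hcon
      have hkle : k ≤ finrank K (LinearMap.ker f') := by omega
      set d := finrank K (LinearMap.ker f') with hd
      have : Module.Free K (LinearMap.ker f') := Module.Free.of_divisionRing K (LinearMap.ker f')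
      let s : Basis (Fin d) K (LinearMap.ker f') := finBasis K (LinearMap.ker f')
      set v : Fin k → E := fun j => ((s (Fin.castLE hkle j) : W) : E) with hv
      have hvind : LinearIndependent K v := by
        have h1 : LinearIndependent K (fun j : Fin k => s (Fin.castLE hkle j)) :=
          s.linearIndependent.comp _ (Fin.castLE_injective hkle)
        have h2 := h1.map_injOn ((LinearMap.ker f').subtype) Subtype.val_injective.injOn
        have h3 := h2.map_injOn (W.subtype) Subtype.val_injective.injOn
        exact h3
      have hvzero : ∀ j, ∑ i, l i * v j ^ (q ^ (i : ℕ)) = 0 := by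
        intro j
        have h0 : f (v j) = 0 := LinearMap.mem_ker.mp (s (Fin.castLE hkle j)).2
        rw [hf, qlin_apply] at h0
        exact h0
      have := moore_vanish (K := K) l v hvind hvzero
      rw [this] at hl
      apply hc0
      rw [← hl]
      simp
    -- conclude
    rw [hrk2, hrangec, ← hrange]
    omega
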